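/- Let σ be a chip configuration on K_n and define ψ(σ)(x) = (σ(⌈nx⌉) + ⌈nx⌉ - nx)/n for x ∈ [0,1]. Then U(ψ(σ)) = ψ(Uσ), where U on the left is the generalized update and on the right the chip-firing update. -/

import Mathlib

open MeasureTheory

/-- The fraction of unstable sites of a generalized chip configuration `η : [0,1] → [0,∞)`. -/
noncomputable def genR (η : ℝ → ℝ) : ℝ :=
  (volume {x ∈ Set.Icc (0:ℝ) 1 | 1 ≤ η x}).toReal

/-- The parallel update rule for generalized chip configurations. -/
noncomputable def genU (η : ℝ → ℝ) : ℝ → ℝ :=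
  fun x => η x + genR η - if 1 ≤ η x then 1 else 0

/-- Number of unstable vertices, for a chip configuration indexed by vertices 1,…,n. -/
def chipR' (n : ℕ) (σ : ℕ → ℕ) : ℕ :=
  ((Finset.Icc 1 n).filter (fun v => n ≤ σ v)).card

/-- Parallel chip-firing update on the complete graph K_n, vertices 1,…,n. -/
def chipU' (n : ℕ) (σ : ℕ → ℕ) : ℕ → ℕ :=
  fun v => if n ≤ σ v then σ v + chipR' n σ - n else σ v + chipR' n σ

lemma key_iff (n : ℕ) (hn : 0 < n) (σ : ℕ → ℕ) (x : ℝ) :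
    (1 ≤ ((σ (⌈(n:ℝ)*x⌉.toNat) : ℝ) + (⌈(n:ℝ)*x⌉ : ℝ) - n*x) / n) ↔
      n ≤ σ (⌈(n:ℝ)*x⌉.toNat) := by
  have hn' : (0:ℝ) < n := by exact_mod_cast hn
  rw [le_div_iff₀ hn', one_mul]
  have h1 : ((n:ℝ)*x) ≤ ((⌈(n:ℝ)*x⌉ : ℤ) : ℝ) := Int.le_ceil _
  have h2 : ((⌈(n:ℝ)*x⌉ : ℤ) : ℝ) < (n:ℝ)*x + 1 := Int.ceil_lt_add_one _
  constructor
  · intro h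
    have h4 : (n:ℝ) < (σ (⌈(n:ℝ)*x⌉.toNat) : ℝ) + 1 := by linarith
    have : n < σ (⌈(n:ℝ)*x⌉.toNat) + 1 := by exact_mod_cast h4
    omega
  · intro h
    have : (n:ℝ) ≤ (σ (⌈(n:ℝ)*x⌉.toNat) : ℝ) := by exact_mod_cast h
    linarith

lemma set_eq_union (n : ℕ) (hn : 0 < n) (σ : ℕ → ℕ) :
    {x ∈ Set.Icc (0:ℝ) 1 | n ≤ σ (⌈(n:ℝ)*x⌉.toNat)} \ {0} =
      ⋃ k ∈ (Finset.Icc 1 n).filter (fun v => n ≤ σ v),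
        Set.Ioc (((k:ℝ)-1)/n) ((k:ℝ)/n) := by
  have hn' : (0:ℝ) < n := by exact_mod_cast hn
  ext x
  simp only [Set.mem_diff, Set.mem_setOf_eq, Set.mem_singleton_iff, Set.mem_iUnion,
    Set.mem_Ioc, Finset.mem_filter, Finset.mem_Icc, Set.mem_Icc, exists_prop]
  constructor
  · rintro ⟨⟨⟨hx0, hx1⟩, hσ⟩, hxne⟩
    have hxpos : 0 < x := lt_of_le_of_ne hx0 (Ne.symm hxne)
    have hnx : (0:ℝ) < (n:ℝ)*x := by positivity
    have hc1 : (0:ℤ) < ⌈(n:ℝ)*x⌉ := Int.ceil_pos.mpr hnx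
    have hcn : ⌈(n:ℝ)*x⌉ ≤ (n:ℤ) := Int.ceil_le.mpr (by
      push_cast; nlinarith)
    have hmval : ((⌈(n:ℝ)*x⌉.toNat : ℕ) : ℝ) = ((⌈(n:ℝ)*x⌉ : ℤ) : ℝ) := by
      exact_mod_cast Int.toNat_of_nonneg hc1.le
    refine ⟨⌈(n:ℝ)*x⌉.toNat, ⟨⟨by omega, by omega⟩, hσ⟩, ?_, ?_⟩
    · rw [div_lt_iff₀ hn']
      have := Int.ceil_lt_add_one ((n:ℝ)*x)
      push_cast at hmval ⊢
      rw [hmval]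
      linarith [mul_comm (n:ℝ) x ▸ this]
    · rw [le_div_iff₀ hn']
      have := Int.le_ceil ((n:ℝ)*x)
      push_cast at hmval ⊢
      rw [hmval]
      linarith
  · rintro ⟨k, ⟨⟨hk1, hkn⟩, hσk⟩, hxl, hxr⟩
    have hk1' : (1:ℝ) ≤ (k:ℝ) := by exact_mod_cast hk1
    have hxl' : ((k:ℝ)-1) < (n:ℝ)*x := by
      rw [div_lt_iff₀ hn'] at hxl; linarith [mul_comm x (n:ℝ)]
    have hxr' : (n:ℝ)*x ≤ (k:ℝ) := by
      rw [le_div_iff₀ hn'] at hxr; linarith [mul_comm x (n:ℝ)]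
    have hceil : ⌈(n:ℝ)*x⌉ = (k:ℤ) := by
      rw [Int.ceil_eq_iff]; constructor <;> push_cast <;> linarith
    have hxpos : 0 < x := by
      have : (0:ℝ) ≤ ((k:ℝ)-1)/n := div_nonneg (by linarith) hn'.le
      linarith
    refine ⟨⟨⟨hxpos.le, ?_⟩, ?_⟩, hxpos.ne'⟩
    · have hkn' : (k:ℝ) ≤ (n:ℝ) := by exact_mod_cast hkn
      calc x ≤ (k:ℝ)/n := hxr
        _ ≤ (n:ℝ)/n := by gcongr
        _ = 1 := div_self hn'.ne'
    · rw [hceil, Int.toNat_natCast]; exact hσk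

lemma genR_eq (n : ℕ) (hn : 0 < n) (σ : ℕ → ℕ) :
    (volume {x ∈ Set.Icc (0:ℝ) 1 | n ≤ σ (⌈(n:ℝ)*x⌉.toNat)}).toReal
      = (chipR' n σ : ℝ) / n := by
  have hn' : (0:ℝ) < n := by exact_mod_cast hn
  set S := {x ∈ Set.Icc (0:ℝ) 1 | n ≤ σ (⌈(n:ℝ)*x⌉.toNat)} with hS
  set F := (Finset.Icc 1 n).filter (fun v => n ≤ σ v) with hF
  have hvol : volume S = volume (S \ {0}) :=
    (measure_diff_null (measure_singleton 0)).symm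
  rw [hvol, set_eq_union n hn σ]
  rw [measure_biUnion_finset ?hdisj (fun k _ => measurableSet_Ioc)]
  case hdisj =>
    intro k hk l hl hkl
    simp only [Function.onFun]
    rw [Set.Ioc_disjoint_Ioc]
    rcases (Ne.lt_or_gt hkl) with h | h
    · have : (k:ℝ) ≤ (l:ℝ) - 1 := by
        have : (k:ℕ) + 1 ≤ l := h
        have := (Nat.cast_le (α := ℝ)).mpr this
        push_cast at this; linarith
      calc min ((k:ℝ)/n) ((l:ℝ)/n) ≤ (k:ℝ)/n := min_le_left _ _
        _ ≤ ((l:ℝ)-1)/n := by gcongr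
        _ ≤ max (((k:ℝ)-1)/n) (((l:ℝ)-1)/n) := le_max_right _ _
    · have : (l:ℝ) ≤ (k:ℝ) - 1 := by
        have : (l:ℕ) + 1 ≤ k := h
        have := (Nat.cast_le (α := ℝ)).mpr this
        push_cast at this; linarith
      calc min ((k:ℝ)/n) ((l:ℝ)/n) ≤ (l:ℝ)/n := min_le_right _ _
        _ ≤ ((k:ℝ)-1)/n := by gcongr
        _ ≤ max (((k:ℝ)-1)/n) (((l:ℝ)-1)/n) := le_max_left _ _
  have hterm : ∀ k ∈ F, volume (Set.Ioc (((k:ℝ)-1)/n) ((k:ℝ)/n)) = ENNReal.ofReal (1/n) := by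
    intro k _
    rw [Real.volume_Ioc]
    congr 1
    field_simp
    ring
  rw [Finset.sum_congr rfl hterm, Finset.sum_const, nsmul_eq_mul]
  rw [ENNReal.toReal_mul, ENNReal.toReal_ofReal (by positivity), ENNReal.toReal_natCast]
  rw [chipR', ← hF]
  ring

theorem update_commutes_with_embedding (n : ℕ) (hn : 0 < n) (σ : ℕ → ℕ)
    (ψ : (ℕ → ℕ) → ℝ → ℝ)
    (hψ : ∀ (τ : ℕ → ℕ) (x : ℝ),
      ψ τ x = ((τ (⌈(n : ℝ) * x⌉.toNat) : ℝ) + (⌈(n : ℝ) * x⌉ : ℝ) - n * x) / n) :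
    ∀ x ∈ Set.Icc (0:ℝ) 1, genU (ψ σ) x = ψ (chipU' n σ) x := by
  have hn' : (0:ℝ) < n := by exact_mod_cast hn
  have hsetEq : {x ∈ Set.Icc (0:ℝ) 1 | 1 ≤ ψ σ x}
      = {x ∈ Set.Icc (0:ℝ) 1 | n ≤ σ (⌈(n:ℝ)*x⌉.toNat)} := by
    ext y
    simp only [Set.mem_setOf_eq, hψ]
    exact and_congr_right fun _ => key_iff n hn σ y
  have hgenR : genR (ψ σ) = (chipR' n σ : ℝ) / n := by
    rw [genR, hsetEq, genR_eq n hn σ]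
  intro x _
  rw [genU, hgenR, hψ, hψ]
  set k := (⌈(n:ℝ)*x⌉).toNat with hk
  by_cases h : n ≤ σ k
  · have hiff := (key_iff n hn σ x).mpr h
    rw [if_pos hiff]
    have hcast : ((chipU' n σ k : ℕ) : ℝ) = (σ k : ℝ) + (chipR' n σ : ℝ) - n := by
      rw [chipU', if_pos h]
      have : n ≤ σ k + chipR' n σ := le_trans h (Nat.le_add_right _ _)
      push_cast [Nat.cast_sub this]
      ring
    rw [hcast]
    field_simp
    ring
  · have hiff : ¬ (1 ≤ ((σ (⌈(n:ℝ)*x⌉.toNat) : ℝ) + (⌈(n:ℝ)*x⌉ : ℝ) - n*x) / n) := by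
      rw [key_iff n hn σ x]; exact h
    rw [if_neg hiff]
    have hcast : ((chipU' n σ k : ℕ) : ℝ) = (σ k : ℝ) + (chipR' n σ : ℝ) := by
      rw [chipU', if_neg h]; push_cast; ring
    rw [hcast]
    field_simp
    ring
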